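/- Let p, q, r be three non-collinear points in ℝ² with r strictly to the left of the directed line from p to q, and let u be a direction. Suppose the Euclidean bisectors b_{pq} and b_{pr} (loci of centers of circles through the respective pairs) are both hit by the ray u[p], with u[p] hitting b_{pr} strictly before b_{pq}. Then the intersection point b_{pr} ∩ b_{pq} (the circumcenter of p, q, r) lies strictly to the right of the oriented line through u[p]; consequently, every ray ρ from p that lies counterclockwise to u[p] and intersects b_{pq} also hits b_{pr} strictly before b_{pq}. -/

import Mathlib

open Real

noncomputable def cross2 (a b : ℂ) : ℝ := a.re * b.im - a.im * b.re

private lemma distEq {x y z : ℂ} :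
    dist x y = dist x z ↔ Complex.normSq (x - y) = Complex.normSq (x - z) := by
  rw [Complex.dist_eq, Complex.dist_eq, Complex.norm_def, Complex.norm_def]
  constructor
  · intro h
    have h2 := congrArg (fun t => t ^ 2) h
    simpa [Real.sq_sqrt (Complex.normSq_nonneg _)] using h2
  · intro h; rw [h]

private lemma pos_core (a b c d t₁ t₂ : ℝ) (ht₁ : 0 ≤ t₁) (h12 : t₁ < t₂)
    (hH : 0 < a * d - b * c) (hc2 : 2 * t₁ * c = c ^ 2 + d ^ 2)
    (ha2 : 2 * t₂ * a = a ^ 2 + b ^ 2) :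
    0 < a ∧ 0 < c ∧ 0 < t₁ := by
  have ht₂ : 0 < t₂ := lt_of_le_of_lt ht₁ h12
  have hcd0 : 0 ≤ c ^ 2 + d ^ 2 := by positivity
  have hab0 : 0 ≤ a ^ 2 + b ^ 2 := by positivity
  have habpos : 0 < a ^ 2 + b ^ 2 := by
    nlinarith [sq_nonneg (a * c + b * d), mul_pos hH hH]
  have hcdpos : 0 < c ^ 2 + d ^ 2 := by
    nlinarith [sq_nonneg (a * c + b * d), mul_pos hH hH]
  have hapos : 0 < a := by nlinarith
  have hcpos : 0 < c := by nlinarith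
  have ht₁pos : 0 < t₁ := by nlinarith
  exact ⟨hapos, hcpos, ht₁pos⟩

private lemma core1 (a b c d α β t₁ t₂ : ℝ) (ht₁ : 0 ≤ t₁) (h12 : t₁ < t₂)
    (hH : 0 < a * d - b * c) (hc2 : 2 * t₁ * c = c ^ 2 + d ^ 2)
    (ha2 : 2 * t₂ * a = a ^ 2 + b ^ 2)
    (E4 : 2 * (α * a + β * b) = a ^ 2 + b ^ 2)
    (E5 : 2 * (α * c + β * d) = c ^ 2 + d ^ 2) : β < 0 := by
  obtain ⟨hapos, hcpos, ht₁pos⟩ := pos_core a b c d t₁ t₂ ht₁ h12 hH hc2 ha2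
  have hlin : β * (b * c - a * d) = (t₂ - t₁) * (a * c) := by
    linear_combination (c / 2) * E4 - (a / 2) * E5 - (c / 2) * ha2 + (a / 2) * hc2
  nlinarith [mul_pos (mul_pos (sub_pos.mpr h12) hapos) hcpos]

private lemma core2 (a b c d t₁ t₂ C S s₂ : ℝ) (ht₁ : 0 ≤ t₁) (h12 : t₁ < t₂)
    (hH : 0 < a * d - b * c) (hc2 : 2 * t₁ * c = c ^ 2 + d ^ 2)
    (ha2 : 2 * t₂ * a = a ^ 2 + b ^ 2) (hS : 0 < S) (hs₂ : 0 ≤ s₂)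
    (E6 : 2 * s₂ * (C * a + S * b) = a ^ 2 + b ^ 2) :
    ∃ s₁ : ℝ, 0 ≤ s₁ ∧ s₁ < s₂ ∧ 2 * s₁ * (C * c + S * d) = c ^ 2 + d ^ 2 := by
  obtain ⟨hapos, hcpos, ht₁pos⟩ := pos_core a b c d t₁ t₂ ht₁ h12 hH hc2 ha2
  have ht₂ : 0 < t₂ := lt_of_le_of_lt ht₁ h12
  have habpos : 0 < a ^ 2 + b ^ 2 := by nlinarith [mul_pos ht₂ hapos]
  have hCaSb : 0 < C * a + S * b := by nlinarith
  have hs₂pos : 0 < s₂ := by nlinarith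
  have hK : 0 < t₂ * a * (C * c + S * d) - t₁ * c * (C * a + S * b) := by
    nlinarith [mul_pos (mul_pos (sub_pos.mpr h12) hcpos) hCaSb,
      mul_pos (mul_pos hS ht₂) hH]
  have hCcSd : 0 < C * c + S * d := by
    nlinarith [mul_pos ht₂ hapos, mul_pos (mul_pos ht₁pos hcpos) hCaSb]
  have hs2e : s₂ * (C * a + S * b) = t₂ * a := by linarith
  have hs2e2 : s₂ * (C * a + S * b) * (C * c + S * d) = t₂ * a * (C * c + S * d) := by
    rw [hs2e]
  refine ⟨t₁ * c / (C * c + S * d),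
    le_of_lt (div_pos (mul_pos ht₁pos hcpos) hCcSd), ?_, ?_⟩
  · rw [div_lt_iff₀ hCcSd]
    nlinarith [hK, hs2e2, hCaSb]
  · field_simp
    rw [mul_div_assoc, div_self (ne_of_gt (by linarith [hCcSd] : (0:ℝ) < c * C + S * d)), mul_one]
    linarith [hc2]

theorem stmt_18 (p q r o : ℂ)
    (hncol : ¬ Collinear ℝ ({p, q, r} : Set ℂ))
    (hleft : 0 < cross2 (q - p) (r - p))
    (u : ℂ) (hu : ‖u‖ = 1)
    (t₁ t₂ : ℝ) (ht₁ : 0 ≤ t₁) (ht₁₂ : t₁ < t₂)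
    (hhitr : dist (p + t₁ • u) p = dist (p + t₁ • u) r)
    (hhitq : dist (p + t₂ • u) p = dist (p + t₂ • u) q)
    (hoq : dist o p = dist o q) (hor : dist o p = dist o r) :
    cross2 u (o - p) < 0 ∧
    ∀ θ : ℝ, 0 < θ → θ < π → ∀ s₂ : ℝ, 0 ≤ s₂ →
      dist (p + s₂ • (Complex.exp ((θ : ℂ) * Complex.I) * u)) p =
        dist (p + s₂ • (Complex.exp ((θ : ℂ) * Complex.I) * u)) q →
      ∃ s₁ : ℝ, 0 ≤ s₁ ∧ s₁ < s₂ ∧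
        dist (p + s₁ • (Complex.exp ((θ : ℂ) * Complex.I) * u)) p =
          dist (p + s₁ • (Complex.exp ((θ : ℂ) * Complex.I) * u)) r := by
  have hu2 : u.re ^ 2 + u.im ^ 2 = 1 := by
    have h := congrArg (fun t => t ^ 2) hu
    simp only [Complex.sq_norm, one_pow] at h
    simpa [Complex.normSq_apply, sq] using h
  have h1 := distEq.mp hhitr
  have h2 := distEq.mp hhitq
  have h3 := distEq.mp hoq
  have h4 := distEq.mp hor
  simp only [Complex.normSq_apply, Complex.add_re, Complex.add_im, Complex.sub_re,
    Complex.sub_im, Complex.smul_re, Complex.smul_im, smul_eq_mul] at h1 h2 h3 h4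
  have hle : 0 < (q.re - p.re) * (r.im - p.im) - (q.im - p.im) * (r.re - p.re) := by
    simpa [cross2, Complex.sub_re, Complex.sub_im] using hleft
  -- abbreviations (purely for readability of the `linear_combination` certificates)
  have hH : 0 < (u.re * (q.re - p.re) + u.im * (q.im - p.im)) *
      (u.re * (r.im - p.im) - u.im * (r.re - p.re)) -
      (u.re * (q.im - p.im) - u.im * (q.re - p.re)) *
      (u.re * (r.re - p.re) + u.im * (r.im - p.im)) := by
    have key : (u.re * (q.re - p.re) + u.im * (q.im - p.im)) *
        (u.re * (r.im - p.im) - u.im * (r.re - p.re)) -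
        (u.re * (q.im - p.im) - u.im * (q.re - p.re)) *
        (u.re * (r.re - p.re) + u.im * (r.im - p.im)) =
        (u.re ^ 2 + u.im ^ 2) *
          ((q.re - p.re) * (r.im - p.im) - (q.im - p.im) * (r.re - p.re)) := by ring
    rw [key, hu2, one_mul]; exact hle
  have hc2 : 2 * t₁ * (u.re * (r.re - p.re) + u.im * (r.im - p.im)) =
      (u.re * (r.re - p.re) + u.im * (r.im - p.im)) ^ 2 +
      (u.re * (r.im - p.im) - u.im * (r.re - p.re)) ^ 2 := by
    linear_combination h1 - ((r.re - p.re) ^ 2 + (r.im - p.im) ^ 2) * hu2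
  have ha2 : 2 * t₂ * (u.re * (q.re - p.re) + u.im * (q.im - p.im)) =
      (u.re * (q.re - p.re) + u.im * (q.im - p.im)) ^ 2 +
      (u.re * (q.im - p.im) - u.im * (q.re - p.re)) ^ 2 := by
    linear_combination h2 - ((q.re - p.re) ^ 2 + (q.im - p.im) ^ 2) * hu2
  constructor
  · have E4 : 2 * ((u.re * (o.re - p.re) + u.im * (o.im - p.im)) *
        (u.re * (q.re - p.re) + u.im * (q.im - p.im)) +
        (u.re * (o.im - p.im) - u.im * (o.re - p.re)) *
        (u.re * (q.im - p.im) - u.im * (q.re - p.re))) =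
        (u.re * (q.re - p.re) + u.im * (q.im - p.im)) ^ 2 +
        (u.re * (q.im - p.im) - u.im * (q.re - p.re)) ^ 2 := by
      linear_combination (u.re ^ 2 + u.im ^ 2) * h3
    have E5 : 2 * ((u.re * (o.re - p.re) + u.im * (o.im - p.im)) *
        (u.re * (r.re - p.re) + u.im * (r.im - p.im)) +
        (u.re * (o.im - p.im) - u.im * (o.re - p.re)) *
        (u.re * (r.im - p.im) - u.im * (r.re - p.re))) =
        (u.re * (r.re - p.re) + u.im * (r.im - p.im)) ^ 2 +
        (u.re * (r.im - p.im) - u.im * (r.re - p.re)) ^ 2 := by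
      linear_combination (u.re ^ 2 + u.im ^ 2) * h4
    have hβ := core1 (u.re * (q.re - p.re) + u.im * (q.im - p.im))
      (u.re * (q.im - p.im) - u.im * (q.re - p.re))
      (u.re * (r.re - p.re) + u.im * (r.im - p.im))
      (u.re * (r.im - p.im) - u.im * (r.re - p.re))
      (u.re * (o.re - p.re) + u.im * (o.im - p.im))
      (u.re * (o.im - p.im) - u.im * (o.re - p.re))
      t₁ t₂ ht₁ ht₁₂ hH hc2 ha2 E4 E5
    simpa [cross2, Complex.sub_re, Complex.sub_im] using hβ
  · intro θ hθ1 hθ2 s₂ hs₂ hhit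
    have hS : 0 < Real.sin θ := Real.sin_pos_of_pos_of_lt_pi hθ1 hθ2
    have h5 := distEq.mp hhit
    simp only [Complex.normSq_apply, Complex.add_re, Complex.add_im, Complex.sub_re,
      Complex.sub_im, Complex.smul_re, Complex.smul_im, smul_eq_mul, Complex.mul_re,
      Complex.mul_im, Complex.exp_ofReal_mul_I_re, Complex.exp_ofReal_mul_I_im] at h5
    have E6 : 2 * s₂ * (Real.cos θ * (u.re * (q.re - p.re) + u.im * (q.im - p.im)) +
        Real.sin θ * (u.re * (q.im - p.im) - u.im * (q.re - p.re))) =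
        (u.re * (q.re - p.re) + u.im * (q.im - p.im)) ^ 2 +
        (u.re * (q.im - p.im) - u.im * (q.re - p.re)) ^ 2 := by
      linear_combination h5 - ((q.re - p.re) ^ 2 + (q.im - p.im) ^ 2) * hu2
    obtain ⟨s₁, hs₁0, hs₁lt, heq⟩ := core2
      (u.re * (q.re - p.re) + u.im * (q.im - p.im))
      (u.re * (q.im - p.im) - u.im * (q.re - p.re))
      (u.re * (r.re - p.re) + u.im * (r.im - p.im))
      (u.re * (r.im - p.im) - u.im * (r.re - p.re))
      t₁ t₂ (Real.cos θ) (Real.sin θ) s₂ ht₁ ht₁₂ hH hc2 ha2 hS hs₂ E6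
    refine ⟨s₁, hs₁0, hs₁lt, distEq.mpr ?_⟩
    simp only [Complex.normSq_apply, Complex.add_re, Complex.add_im, Complex.sub_re,
      Complex.sub_im, Complex.smul_re, Complex.smul_im, smul_eq_mul, Complex.mul_re,
      Complex.mul_im, Complex.exp_ofReal_mul_I_re, Complex.exp_ofReal_mul_I_im]
    linear_combination heq + ((r.re - p.re) ^ 2 + (r.im - p.im) ^ 2) * hu2
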